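/- The cardinality of NC_s(2n) equals the cardinality of NC(n), namely the Catalan number C_n = (1/(n+1))·binom(2n,n). -/

import Mathlib

open scoped Classical


/-- Two blocks `B`, `C` cross: there are `i < k < p < q` with `i, p ∈ B` and `k, q ∈ C`. -/
def Crosses {n : ℕ} (B C : Finset (Fin n)) : Prop :=
  ∃ i k p q : Fin n, i < k ∧ k < p ∧ p < q ∧ i ∈ B ∧ p ∈ B ∧ k ∈ C ∧ q ∈ C

/-- `π` is a non-crossing linked partition of `{1, …, n}` (encoded as `Fin n`):
its (nonempty) blocks cover `Fin n`, are pairwise non-crossing, any two distinct blocks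
intersect in at most one element, and if two distinct blocks intersect in `{j}` then both
blocks have at least two elements and `j` is the minimal element of exactly one of them. -/
def IsNCL (n : ℕ) (π : Finset (Finset (Fin n))) : Prop :=
  (∀ B ∈ π, B.Nonempty) ∧
  (∀ x : Fin n, ∃ B ∈ π, x ∈ B) ∧
  (∀ B ∈ π, ∀ C ∈ π, B ≠ C → ¬ Crosses B C) ∧
  (∀ B ∈ π, ∀ C ∈ π, B ≠ C → (B ∩ C).card ≤ 1 ∧
    ∀ j : Fin n, B ∩ C = {j} →
      2 ≤ B.card ∧ 2 ≤ C.card ∧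
        Xor' (B.min = (j : WithBot (Fin n))) (C.min = (j : WithBot (Fin n))))

/-- `π` is a non-crossing partition: a non-crossing linked partition with pairwise
disjoint blocks. -/
def IsNC (n : ℕ) (π : Finset (Finset (Fin n))) : Prop :=
  IsNCL n π ∧ ∀ B ∈ π, ∀ C ∈ π, B ≠ C → Disjoint B C

/-- `Refines n σ π` (i.e. `σ ⪯ π`): every block of `π` is a union of blocks of `σ`. -/
def Refines (n : ℕ) (σ π : Finset (Finset (Fin n))) : Prop :=
  ∀ B ∈ π, ∃ S : Finset (Finset (Fin n)), S ⊆ σ ∧ B = S.sup id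

/-- `a` and `b` lie in a common block of `π`. -/
def Linked {n : ℕ} (π : Finset (Finset (Fin n))) (a b : Fin n) : Prop :=
  ∃ B ∈ π, a ∈ B ∧ b ∈ B

/-- `a` and `b` are connected in `π`: joined by a chain of pairwise intersecting blocks. -/
def Connected {n : ℕ} (π : Finset (Finset (Fin n))) (a b : Fin n) : Prop :=
  Relation.ReflTransGen (Linked π) a b

/-- The partition `c(π)` of `Fin n` into the connected components of `π`. -/
noncomputable def cPart (n : ℕ) (π : Finset (Finset (Fin n))) : Finset (Finset (Fin n)) :=
  Finset.univ.image fun i => Finset.univ.filter (Connected π i)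

/-- Embedding of the unbarred copy: `i ↦ 2 i` in the interleaved order
`1, 1̄, 2, 2̄, …, n, n̄`. -/
def ueEmb (n : ℕ) (i : Fin n) : Fin (2 * n) := ⟨2 * i.1, by have := i.isLt; omega⟩

/-- Embedding of the barred copy: `i ↦ 2 i + 1` in the interleaved order. -/
def beEmb (n : ℕ) (i : Fin n) : Fin (2 * n) := ⟨2 * i.1 + 1, by have := i.isLt; omega⟩

/-- The union `γ ∪ γ'` inside the interleaved ordered set `1, 1̄, 2, 2̄, …, n, n̄`. -/
def interleave (n : ℕ) (γ γ' : Finset (Finset (Fin n))) : Finset (Finset (Fin (2 * n))) :=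
  γ.image (Finset.image (ueEmb n)) ∪ γ'.image (Finset.image (beEmb n))

/-- `γ'` is the Kreweras complement of `γ`: the largest non-crossing partition (in the
refinement order) such that `γ ∪ γ'` is non-crossing in the interleaved order. -/
def IsKr (n : ℕ) (γ γ' : Finset (Finset (Fin n))) : Prop :=
  IsNC n γ' ∧ IsNC (2 * n) (interleave n γ γ') ∧
  ∀ τ, IsNC n τ → IsNC (2 * n) (interleave n γ τ) → Refines n τ γ'

/-- `B` is an exterior block of `γ`: no other block `D` of `γ` contains elements `l, s`
with `l = min B`, or `l < min B` and `max B < s`. -/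
def IsExteriorIn (n : ℕ) (γ : Finset (Finset (Fin n))) (B : Finset (Fin n)) : Prop :=
  B ∈ γ ∧ ∀ D ∈ γ, D ≠ B → ∀ l ∈ D, ∀ s ∈ D,
    ¬((l ∈ B ∧ ∀ b ∈ B, l ≤ b) ∨ (∀ b ∈ B, l < b ∧ b < s))

/-- Halving map `Fin (2n) → Fin n`. -/
def halfEmb (n : ℕ) (i : Fin (2 * n)) : Fin n := ⟨i.1 / 2, by have := i.isLt; omega⟩

/-- `γ₋`: the restriction of `γ ∈ NC(2n)` to the odd elements `{1, 3, …, 2n − 1}`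
(indices `≡ 0 mod 2` in the `0`-based encoding), identified with a partition of `Fin n`. -/
noncomputable def minusPart (n : ℕ) (γ : Finset (Finset (Fin (2 * n)))) :
    Finset (Finset (Fin n)) :=
  (γ.filter fun B => ∀ i ∈ B, i.1 % 2 = 0).image (Finset.image (halfEmb n))

/-- `γ₊`: the restriction of `γ ∈ NC(2n)` to the even elements `{2, 4, …, 2n}`,
identified with a partition of `Fin n`. -/
noncomputable def plusPart (n : ℕ) (γ : Finset (Finset (Fin (2 * n)))) :
    Finset (Finset (Fin n)) :=
  (γ.filter fun B => ∀ i ∈ B, i.1 % 2 = 1).image (Finset.image (halfEmb n))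

/-- `γ ∈ NC_s(2n)`: a non-crossing partition of `{1, …, 2n}` all of whose blocks have
elements of constant parity, with `γ₊ = Kr(γ₋)`. -/
def NCs (n : ℕ) (γ : Finset (Finset (Fin (2 * n)))) : Prop :=
  IsNC (2 * n) γ ∧
  (∀ B ∈ γ, (∀ i ∈ B, i.1 % 2 = 0) ∨ (∀ i ∈ B, i.1 % 2 = 1)) ∧
  IsKr n (minusPart n γ) (plusPart n γ)

/-- The restriction of `γ` to a subset `S`. -/
noncomputable def restrictTo (n : ℕ) (γ : Finset (Finset (Fin n))) (S : Finset (Fin n)) :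
    Finset (Finset (Fin n)) :=
  (γ.image fun B => B ∩ S).filter Finset.Nonempty

/-- A planar rooted tree: a root together with a linearly ordered (left to right) list of
subtrees. -/
inductive PTree where
  | node : List PTree → PTree

mutual
/-- Number of vertices of a planar rooted tree. -/
def PTree.size : PTree → ℕ
  | .node ts => 1 + sizeList ts
def sizeList : List PTree → ℕ
  | [] => 0
  | t :: ts => PTree.size t + sizeList ts
end

/-- Depth-first indices of the roots of a list of trees, the first root getting index `k`. -/
def childRoots : List PTree → ℕ → List ℕ
  | [], _ => []
  | t :: ts, k => k :: childRoots ts (k + PTree.size t)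

mutual
/-- The blocks of the constituent elementary trees (a root together with its offsprings,
provided there is at least one offspring) of a planar tree, with vertices numbered in
depth-first (left-first) order starting at `k`. -/
def PTree.blk : PTree → ℕ → List (List ℕ)
  | .node ts, k =>
      (if ts.isEmpty then [] else [k :: childRoots ts (k + 1)]) ++ blkList ts (k + 1)
def blkList : List PTree → ℕ → List (List ℕ)
  | [], _ => []
  | t :: ts, k => PTree.blk t k ++ blkList ts (k + PTree.size t)
end

/-- The blocks of the elementary trees constituting a planar tree, in depth-first
numbering starting at `0`; a single vertex is itself an elementary tree. -/
def treeBlocks : PTree → List (List ℕ)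
  | .node [] => [[0]]
  | t => t.blk 0

/-- Convert a list of (`0`-based) vertex numbers into a block of `Fin n`. -/
def listToBlock (n : ℕ) (l : List ℕ) : Finset (Fin n) :=
  (l.filterMap fun i => if h : i < n then some (⟨i, h⟩ : Fin n) else none).toFinset

mutual
/-- Evaluation of a planar rooted tree: the product over its vertices of `f k`, where `k`
is the number of offsprings of the vertex (so an elementary tree with `m` vertices
contributes `f (m − 1)`). -/
def PTree.eval (f : ℕ → ℂ) : PTree → ℂ
  | .node ts => f ts.length * evalList f ts
def evalList (f : ℕ → ℂ) : List PTree → ℂ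
  | [] => 1
  | t :: ts => PTree.eval f t * evalList f ts
end

/-- A bicolor planar rooted tree: each subtree carries a color (`true` = color 1,
`false` = color 0). -/
inductive BTree where
  | node : List (Bool × BTree) → BTree

mutual
/-- Number of vertices of a bicolor planar tree. -/
def BTree.size : BTree → ℕ
  | .node ts => 1 + bsizeList ts
def bsizeList : List (Bool × BTree) → ℕ
  | [] => 0
  | (_, t) :: ts => BTree.size t + bsizeList ts
end

mutual
/-- Validity of a bicolor planar tree: at every vertex, the offsprings of color 1 precede
the offsprings of color 0. -/
def BTree.Valid : BTree → Prop
  | .node ts => List.Chain' (fun a b => b ≤ a) (ts.map Prod.fst) ∧ bvalidList ts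
def bvalidList : List (Bool × BTree) → Prop
  | [] => True
  | (_, t) :: ts => BTree.Valid t ∧ bvalidList ts
end

/-- A bicolor tree is elementary when all offsprings of the root are leaves. -/
def BTree.IsElementary : BTree → Prop
  | .node ts => ∀ p ∈ ts, p.2 = BTree.node []
/-- The term `t_π[X_1, …, X_n]`: the product over blocks `B = (i_1 < … < i_l)` of `π` of
`t_{l−1}(X_{i_1}, …, X_{i_l})`, times the product over `k ∈ s(π)` (the elements that are
not the minimal element of any block) of `t_0(X_k)`. Here `t m` stands for `t_{m−1}`,
taking `m` arguments. -/
noncomputable def tTerm {A : Type*} [Ring A] (t : ∀ m : ℕ, (Fin m → A) → ℂ)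
    (n : ℕ) (π : Finset (Finset (Fin n))) (X : Fin n → A) : ℂ :=
  (∏ B ∈ π, t B.card fun j => X (B.orderIsoOfFin rfl j).1) *
  ∏ k ∈ Finset.univ.filter
      (fun k : Fin n => ∀ B ∈ π, B.min ≠ (k : WithBot (Fin n))),
    t 1 fun _ => X k

/-- The family `t` satisfies the defining recurrence of the `t`-coefficients:
`φ(X_1 ⋯ X_n) = Σ_{π ∈ NCL(n)} t_π[X_1, …, X_n]`. -/
def TRec {A : Type*} [Ring A] [Algebra ℂ A] (φ : A →ₗ[ℂ] ℂ)
    (t : ∀ m : ℕ, (Fin m → A) → ℂ) : Prop :=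
  ∀ (n : ℕ) (X : Fin (n + 1) → A),
    φ (List.ofFn X).prod =
      ∑ π ∈ Finset.univ.filter (fun π => IsNCL (n + 1) π), tTerm t (n + 1) π X

/-- The term `κ_γ[X_1, …, X_n]`: the product over blocks `B = (i_1 < … < i_l)` of `γ` of
`κ_l(X_{i_1}, …, X_{i_l})`. -/
noncomputable def cumTerm {A : Type*} [Ring A] (κ : ∀ m : ℕ, (Fin m → A) → ℂ)
    (n : ℕ) (γ : Finset (Finset (Fin n))) (X : Fin n → A) : ℂ :=
  ∏ B ∈ γ, κ B.card fun j => X (B.orderIsoOfFin rfl j).1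

/-- The family `κ` satisfies the moment–cumulant recurrence
`φ(X_1 ⋯ X_n) = Σ_{γ ∈ NC(n)} κ_γ[X_1, …, X_n]` defining the free cumulants. -/
def CumRec {A : Type*} [Ring A] [Algebra ℂ A] (φ : A →ₗ[ℂ] ℂ)
    (κ : ∀ m : ℕ, (Fin m → A) → ℂ) : Prop :=
  ∀ (n : ℕ) (X : Fin (n + 1) → A),
    φ (List.ofFn X).prod =
      ∑ γ ∈ Finset.univ.filter (fun γ => IsNC (n + 1) γ), cumTerm κ (n + 1) γ X

/-- Free independence of a family of unital subalgebras: alternating products of centered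
elements have vanishing expectation. -/
def FreeFamily {A : Type*} [Ring A] [Algebra ℂ A] (φ : A →ₗ[ℂ] ℂ) {I : Type*}
    (S : I → Subalgebra ℂ A) : Prop :=
  ∀ (n : ℕ) (a : Fin (n + 1) → A) (idx : Fin (n + 1) → I),
    (∀ k, a k ∈ S (idx k)) → (∀ k, φ (a k) = 0) →
    (∀ k : Fin n, idx k.castSucc ≠ idx k.succ) →
    φ (List.ofFn a).prod = 0

/-- Two elements are free if the unital subalgebras they generate are free. -/
def FreePair {A : Type*} [Ring A] [Algebra ℂ A] (φ : A →ₗ[ℂ] ℂ) (X Y : A) : Prop :=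
  FreeFamily φ fun b : Bool =>
    if b = true then Algebra.adjoin ℂ {X} else Algebra.adjoin ℂ {Y}

/-! ### Infrastructure on partitions -/

section NCInfra

open Finset

/-- A plain partition: nonempty blocks, covering, pairwise disjoint. -/
def IsPart (n : ℕ) (π : Finset (Finset (Fin n))) : Prop :=
  (∀ B ∈ π, B.Nonempty) ∧ (∀ x : Fin n, ∃ B ∈ π, x ∈ B) ∧
  (∀ B ∈ π, ∀ C ∈ π, B ≠ C → Disjoint B C)

/-- Simplified characterization of a non-crossing partition. -/
def IsNC' (n : ℕ) (π : Finset (Finset (Fin n))) : Prop :=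
  IsPart n π ∧ ∀ B ∈ π, ∀ C ∈ π, B ≠ C → ¬ Crosses B C

theorem isNC_iff {n : ℕ} {π : Finset (Finset (Fin n))} : IsNC n π ↔ IsNC' n π := by
  constructor
  · rintro ⟨⟨h1, h2, h3, _⟩, h5⟩; exact ⟨⟨h1, h2, h5⟩, h3⟩
  · rintro ⟨⟨h1, h2, h5⟩, h3⟩
    refine ⟨⟨h1, h2, h3, ?_⟩, h5⟩
    intro B hB C hC hne
    have hd : B ∩ C = ∅ := by
      rw [← Finset.disjoint_iff_inter_eq_empty]; exact h5 B hB C hC hne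
    refine ⟨by simp [hd], fun j hj => ?_⟩
    rw [hd] at hj
    exact absurd hj.symm (Finset.singleton_ne_empty j)

theorem IsPart.eq_of_mem {n : ℕ} {π : Finset (Finset (Fin n))} (h : IsPart n π)
    {B C : Finset (Fin n)} {x : Fin n} (hB : B ∈ π) (hC : C ∈ π)
    (hxB : x ∈ B) (hxC : x ∈ C) : B = C := by
  by_contra hne
  exact (Finset.disjoint_left.mp (h.2.2 B hB C hC hne)) hxB hxC

theorem Linked.symm' {n : ℕ} {π : Finset (Finset (Fin n))} {a b : Fin n}
    (h : Linked π a b) : Linked π b a := by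
  obtain ⟨B, hB, h1, h2⟩ := h; exact ⟨B, hB, h2, h1⟩

theorem IsPart.linked_refl {n : ℕ} {π : Finset (Finset (Fin n))} (h : IsPart n π)
    (x : Fin n) : Linked π x x := by
  obtain ⟨B, hB, hx⟩ := h.2.1 x; exact ⟨B, hB, hx, hx⟩

theorem IsPart.linked_trans {n : ℕ} {π : Finset (Finset (Fin n))} (h : IsPart n π)
    {a b c : Fin n} (h1 : Linked π a b) (h2 : Linked π b c) : Linked π a c := by
  obtain ⟨B, hB, haB, hbB⟩ := h1
  obtain ⟨C, hC, hbC, hcC⟩ := h2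
  exact ⟨B, hB, haB, (h.eq_of_mem hC hB hbC hbB) ▸ hcC⟩

theorem block_eq_filter {n : ℕ} {π : Finset (Finset (Fin n))} (h : IsPart n π)
    {B : Finset (Fin n)} {x : Fin n} (hB : B ∈ π) (hx : x ∈ B) :
    B = Finset.univ.filter (fun y => Linked π x y) := by
  ext y
  simp only [mem_filter, mem_univ, true_and]
  constructor
  · intro hy; exact ⟨B, hB, hx, hy⟩
  · rintro ⟨C, hC, hxC, hyC⟩; rwa [h.eq_of_mem hB hC hx hxC]

theorem part_subset_of_linked {n : ℕ} {π σ : Finset (Finset (Fin n))}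
    (hπ : IsPart n π) (hσ : IsPart n σ)
    (h : ∀ a b, Linked π a b ↔ Linked σ a b) : π ⊆ σ := by
  intro B hB
  obtain ⟨x, hx⟩ := hπ.1 B hB
  obtain ⟨C, hC, hxC⟩ := hσ.2.1 x
  have e1 : B = Finset.univ.filter (fun y => Linked π x y) := block_eq_filter hπ hB hx
  have e2 : C = Finset.univ.filter (fun y => Linked σ x y) := block_eq_filter hσ hC hxC
  have : B = C := by
    rw [e1, e2]; ext y
    simp only [Finset.mem_filter, Finset.mem_univ, true_and]
    exact h x y
  rw [this]; exact hC

theorem part_ext {n : ℕ} {π σ : Finset (Finset (Fin n))}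
    (hπ : IsPart n π) (hσ : IsPart n σ)
    (h : ∀ a b, Linked π a b ↔ Linked σ a b) : π = σ :=
  subset_antisymm (part_subset_of_linked hπ hσ h)
    (part_subset_of_linked hσ hπ fun a b => (h a b).symm)

/-- The partition associated to an equivalence relation. -/
noncomputable def ofRel (n : ℕ) (r : Fin n → Fin n → Prop) : Finset (Finset (Fin n)) :=
  Finset.univ.image fun i => Finset.univ.filter (r i)

theorem ofRel_isPart {n : ℕ} {r : Fin n → Fin n → Prop} (hr : Equivalence r) :
    IsPart n (ofRel n r) := by
  refine ⟨?_, ?_, ?_⟩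
  · intro B hB
    simp only [ofRel, Finset.mem_image, Finset.mem_univ, true_and] at hB
    obtain ⟨i, rfl⟩ := hB
    exact ⟨i, by simp [hr.refl i]⟩
  · intro x
    refine ⟨Finset.univ.filter (r x), ?_, by simp [hr.refl x]⟩
    simp only [ofRel, Finset.mem_image, Finset.mem_univ, true_and]
    exact ⟨x, rfl⟩
  · intro B hB C hC hne
    simp only [ofRel, Finset.mem_image, Finset.mem_univ, true_and] at hB hC
    obtain ⟨i, rfl⟩ := hB
    obtain ⟨j, rfl⟩ := hC
    rw [Finset.disjoint_left]
    intro y hyi hyj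
    simp only [Finset.mem_filter, Finset.mem_univ, true_and] at hyi hyj
    apply hne
    ext z
    simp only [Finset.mem_filter, Finset.mem_univ, true_and]
    constructor
    · intro hz; exact hr.trans (hr.trans hyj (hr.symm hyi)) hz
    · intro hz; exact hr.trans (hr.trans hyi (hr.symm hyj)) hz

theorem ofRel_linked {n : ℕ} {r : Fin n → Fin n → Prop} (hr : Equivalence r)
    {a b : Fin n} : Linked (ofRel n r) a b ↔ r a b := by
  constructor
  · rintro ⟨B, hB, haB, hbB⟩
    simp only [ofRel, Finset.mem_image, Finset.mem_univ, true_and] at hB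
    obtain ⟨i, rfl⟩ := hB
    simp only [Finset.mem_filter, Finset.mem_univ, true_and] at haB hbB
    exact hr.trans (hr.symm haB) hbB
  · intro hab
    refine ⟨Finset.univ.filter (r a), ?_, by simp [hr.refl a], by simp [hab]⟩
    simp only [ofRel, Finset.mem_image, Finset.mem_univ, true_and]
    exact ⟨a, rfl⟩

theorem refines_of_linked_le {n : ℕ} {σ π : Finset (Finset (Fin n))}
    (hσ : IsPart n σ) (hπ : IsPart n π)
    (h : ∀ a b, Linked σ a b → Linked π a b) : Refines n σ π := by
  intro B hB
  refine ⟨σ.filter (fun C => C ⊆ B), Finset.filter_subset _ _, ?_⟩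
  apply le_antisymm
  · intro x hx
    obtain ⟨C, hC, hxC⟩ := hσ.2.1 x
    have hCB : C ⊆ B := by
      intro y hyC
      obtain ⟨D, hD, hxD, hyD⟩ := h x y ⟨C, hC, hxC, hyC⟩
      rwa [hπ.eq_of_mem hD hB hxD hx] at hyD
    have hle : C ≤ (σ.filter (fun C => C ⊆ B)).sup id :=
      Finset.le_sup (f := id) (Finset.mem_filter.mpr ⟨hC, hCB⟩)
    exact hle hxC
  · exact Finset.sup_le fun C hC => (Finset.mem_filter.mp hC).2

theorem linked_le_of_refines {n : ℕ} {σ π : Finset (Finset (Fin n))}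
    (hσ : IsPart n σ) (hπ : IsPart n π) (h : Refines n σ π) :
    ∀ a b, Linked σ a b → Linked π a b := by
  rintro a b ⟨C, hC, haC, hbC⟩
  obtain ⟨B, hB, haB⟩ := hπ.2.1 a
  obtain ⟨S, hS, rfl⟩ := h B hB
  rw [Finset.mem_sup] at haB
  obtain ⟨C', hC', haC'⟩ := haB
  have : C' = C := hσ.eq_of_mem (hS hC') hC haC' haC
  refine ⟨S.sup id, hB, ?_, ?_⟩
  · rw [Finset.mem_sup]; exact ⟨C', hC', haC'⟩
  · rw [Finset.mem_sup]; exact ⟨C', hC', this ▸ hbC⟩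

theorem eq_of_mutual_refines {n : ℕ} {σ π : Finset (Finset (Fin n))}
    (hσ : IsPart n σ) (hπ : IsPart n π)
    (h1 : Refines n σ π) (h2 : Refines n π σ) : σ = π :=
  part_ext hσ hπ fun a b =>
    ⟨fun hl => linked_le_of_refines hσ hπ h1 a b hl,
     fun hl => linked_le_of_refines hπ hσ h2 a b hl⟩

end NCInfra
/-! ### Transfer of partitions along strictly monotone maps -/

section Transfer

open Finset

/-- Pull back a partition along a map (keeping nonempty preimages). -/
noncomputable def pullb {a b : ℕ} (f : Fin a → Fin b) (π : Finset (Finset (Fin b))) :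
    Finset (Finset (Fin a)) :=
  (π.image fun B => Finset.univ.filter (fun x => f x ∈ B)).filter Finset.Nonempty

/-- Push forward a family of blocks along a map. -/
noncomputable def pushb {a b : ℕ} (f : Fin a → Fin b) (σ : Finset (Finset (Fin a))) :
    Finset (Finset (Fin b)) := σ.image (Finset.image f)

theorem mem_pullb {a b : ℕ} {f : Fin a → Fin b} {π : Finset (Finset (Fin b))}
    {D : Finset (Fin a)} :
    D ∈ pullb f π ↔ (∃ B ∈ π, D = Finset.univ.filter (fun x => f x ∈ B)) ∧ D.Nonempty := by
  simp only [pullb, Finset.mem_filter, Finset.mem_image]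
  constructor
  · rintro ⟨⟨B, hB, rfl⟩, hne⟩; exact ⟨⟨B, hB, rfl⟩, hne⟩
  · rintro ⟨⟨B, hB, rfl⟩, hne⟩; exact ⟨⟨B, hB, rfl⟩, hne⟩

theorem filter_preimage_image {a b : ℕ} {f : Fin a → Fin b} (hf : Function.Injective f)
    (C : Finset (Fin a)) :
    Finset.univ.filter (fun x => f x ∈ C.image f) = C := by
  ext x
  simp only [Finset.mem_filter, Finset.mem_univ, true_and, Finset.mem_image]
  constructor
  · rintro ⟨y, hy, hxy⟩; rwa [← hf hxy]
  · intro hx; exact ⟨x, hx, rfl⟩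

theorem image_filter_preimage {a b : ℕ} (f : Fin a → Fin b) (B : Finset (Fin b)) :
    (Finset.univ.filter (fun x => f x ∈ B)).image f = B.filter (fun y => ∃ x, f x = y) := by
  ext y
  simp only [Finset.mem_image, Finset.mem_filter, Finset.mem_univ, true_and]
  constructor
  · rintro ⟨x, hx, rfl⟩; exact ⟨hx, x, rfl⟩
  · rintro ⟨hy, x, rfl⟩; exact ⟨x, hy, rfl⟩

theorem pullb_isNC' {a b : ℕ} {f : Fin a → Fin b} (hf : StrictMono f)
    {π : Finset (Finset (Fin b))} (h : IsNC' b π) : IsNC' a (pullb f π) := by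
  obtain ⟨⟨h1, h2, h3⟩, h4⟩ := h
  have inj := hf.injective
  refine ⟨⟨?_, ?_, ?_⟩, ?_⟩
  · intro B hB; exact (mem_pullb.mp hB).2
  · intro x
    obtain ⟨B, hB, hxB⟩ := h2 (f x)
    refine ⟨Finset.univ.filter (fun y => f y ∈ B), ?_, by simpa using hxB⟩
    exact mem_pullb.mpr ⟨⟨B, hB, rfl⟩, ⟨x, by simpa using hxB⟩⟩
  · intro D hD E hE hne
    obtain ⟨⟨B, hB, rfl⟩, _⟩ := mem_pullb.mp hD
    obtain ⟨⟨C, hC, rfl⟩, _⟩ := mem_pullb.mp hE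
    have hBC : B ≠ C := fun h => hne (by rw [h])
    rw [Finset.disjoint_left]
    intro x hx1 hx2
    simp only [Finset.mem_filter, Finset.mem_univ, true_and] at hx1 hx2
    exact (Finset.disjoint_left.mp (h3 B hB C hC hBC)) hx1 hx2
  · intro D hD E hE hne hcr
    obtain ⟨⟨B, hB, rfl⟩, _⟩ := mem_pullb.mp hD
    obtain ⟨⟨C, hC, rfl⟩, _⟩ := mem_pullb.mp hE
    have hBC : B ≠ C := fun h => hne (by rw [h])
    obtain ⟨i, k, p, q, o1, o2, o3, m1, m2, m3, m4⟩ := hcr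
    simp only [Finset.mem_filter, Finset.mem_univ, true_and] at m1 m2 m3 m4
    exact h4 B hB C hC hBC ⟨f i, f k, f p, f q, hf o1, hf o2, hf o3, m1, m2, m3, m4⟩

theorem pullb_pushb {a b : ℕ} {f : Fin a → Fin b} (hf : Function.Injective f)
    {σ : Finset (Finset (Fin a))} (hne : ∀ C ∈ σ, C.Nonempty) :
    pullb f (pushb f σ) = σ := by
  apply subset_antisymm
  · intro D hD
    obtain ⟨⟨B, hB, rfl⟩, _⟩ := mem_pullb.mp hD
    simp only [pushb, Finset.mem_image] at hB
    obtain ⟨C, hC, rfl⟩ := hB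
    rwa [filter_preimage_image hf]
  · intro C hC
    refine mem_pullb.mpr ⟨⟨C.image f, ?_, (filter_preimage_image hf C).symm⟩, ?_⟩
    · simp only [pushb, Finset.mem_image]; exact ⟨C, hC, rfl⟩
    · exact hne C hC

end Transfer
/-! ### Recursive decomposition of non-crossing partitions -/

section Decomp

open Finset

/-- Inclusion of an initial segment. -/
def lowE {n : ℕ} (M : ℕ) (h : M ≤ n) : Fin M → Fin (n + 1) :=
  fun x => ⟨x.1, by have := x.2; omega⟩

/-- Inclusion of a final segment (skipping position `M`). -/
def hiE {n : ℕ} (M : ℕ) : Fin (n - M) → Fin (n + 1) :=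
  fun x => ⟨x.1 + M + 1, by have := x.2; omega⟩

theorem lowE_strictMono {n M : ℕ} (h : M ≤ n) : StrictMono (lowE (n := n) M h) :=
  fun x y hxy => by
    simp only [lowE, Fin.mk_lt_mk]
    exact hxy

theorem hiE_strictMono {n M : ℕ} : StrictMono (hiE (n := n) M) :=
  fun x y hxy => by
    simp only [hiE, Fin.lt_def] at *
    omega

/-- The block of the last element. -/
noncomputable def blkLast {n : ℕ} (γ : Finset (Finset (Fin (n + 1)))) : Finset (Fin (n + 1)) :=
  Finset.univ.filter (fun y => Linked γ (Fin.last n) y)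

theorem blkLast_spec {n : ℕ} {γ : Finset (Finset (Fin (n + 1)))} (hγ : IsPart (n + 1) γ) :
    blkLast γ ∈ γ ∧ Fin.last n ∈ blkLast γ := by
  obtain ⟨B, hB, hxB⟩ := hγ.2.1 (Fin.last n)
  have : B = blkLast γ := block_eq_filter hγ hB hxB
  constructor
  · rw [← this]; exact hB
  · rw [← this]; exact hxB

/-- The minimum of the block of the last element. -/
noncomputable def mFin {n : ℕ} (γ : Finset (Finset (Fin (n + 1)))) : Fin (n + 1) :=
  if h : (blkLast γ).Nonempty then (blkLast γ).min' h else 0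

theorem mFin_spec {n : ℕ} {γ : Finset (Finset (Fin (n + 1)))} (hγ : IsPart (n + 1) γ) :
    mFin γ ∈ blkLast γ ∧ ∀ x ∈ blkLast γ, mFin γ ≤ x := by
  have hne : (blkLast γ).Nonempty := ⟨Fin.last n, (blkLast_spec hγ).2⟩
  rw [mFin, dif_pos hne]
  exact ⟨Finset.min'_mem _ hne, fun x hx => Finset.min'_le _ x hx⟩

/-- Blocks other than the last one do not straddle `mFin γ`. -/
theorem straddle {n : ℕ} {γ : Finset (Finset (Fin (n + 1)))} (hγ : IsNC' (n + 1) γ)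
    {C : Finset (Fin (n + 1))} (hC : C ∈ γ) (hne : C ≠ blkLast γ) :
    (∀ x ∈ C, x.1 < (mFin γ).1) ∨ (∀ x ∈ C, (mFin γ).1 < x.1) := by
  obtain ⟨hBmem, hlast⟩ := blkLast_spec hγ.1
  obtain ⟨hm, hmin⟩ := mFin_spec hγ.1
  have hdisj := hγ.1.2.2 C hC (blkLast γ) hBmem hne
  by_contra hcon
  push_neg at hcon
  obtain ⟨⟨y, hy, hy2⟩, x, hx, hx2⟩ := hcon
  -- x ∈ C with x ≤ m, y ∈ C with y ≥ m; x ≠ m, y ≠ m since disjoint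
  have hxm : x ≠ mFin γ := fun h => Finset.disjoint_left.mp hdisj hx (h ▸ hm)
  have hym : y ≠ mFin γ := fun h => Finset.disjoint_left.mp hdisj hy (h ▸ hm)
  have hx' : x.1 < (mFin γ).1 := by
    rcases lt_or_eq_of_le hx2 with h | h
    · exact h
    · exact absurd (Fin.ext h) hxm
  have hy' : (mFin γ).1 < y.1 := by
    rcases lt_or_eq_of_le hy2 with h | h
    · exact h
    · exact absurd (Fin.ext h.symm) hym
  have hylast : y ≠ Fin.last n := fun h => Finset.disjoint_left.mp hdisj hy (h ▸ hlast)
  have hylast' : y.1 < n := by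
    have := y.2
    rcases Nat.lt_or_ge y.1 n with h | h
    · exact h
    · exact absurd (Fin.ext (by omega : y.1 = n)) (by simpa [Fin.last] using hylast)
  exact hγ.2 C hC (blkLast γ) hBmem hne
    ⟨x, mFin γ, y, Fin.last n, Fin.lt_def.mpr hx', Fin.lt_def.mpr hy',
      Fin.lt_def.mpr (by rw [Fin.val_last]; exact hylast'),
      hx, hy, hm, hlast⟩

theorem mem_blkLast_ge {n : ℕ} {γ : Finset (Finset (Fin (n + 1)))} (hγ : IsPart (n + 1) γ)
    {x : Fin (n + 1)} (hx : x ∈ blkLast γ) : (mFin γ).1 ≤ x.1 :=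
  (mFin_spec hγ).2 x hx

/-- Linking through a pulled-back partition. -/
theorem linked_pullb {a b : ℕ} {f : Fin a → Fin b} {π : Finset (Finset (Fin b))}
    {x y : Fin a} : Linked (pullb f π) x y ↔ Linked π (f x) (f y) := by
  constructor
  · rintro ⟨D, hD, hxD, hyD⟩
    obtain ⟨⟨B, hB, rfl⟩, _⟩ := mem_pullb.mp hD
    simp only [Finset.mem_filter, Finset.mem_univ, true_and] at hxD hyD
    exact ⟨B, hB, hxD, hyD⟩
  · rintro ⟨B, hB, hxB, hyB⟩
    refine ⟨Finset.univ.filter (fun z => f z ∈ B), mem_pullb.mpr ⟨⟨B, hB, rfl⟩, ⟨x, by simpa using hxB⟩⟩, by simpa using hxB, by simpa using hyB⟩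

end Decomp
/-! ### The inverse construction -/

section GDef

open Finset

variable {n : ℕ}

/-- Possibly insert `m` into a block containing the last element. -/
noncomputable def modif (m : Fin (n + 1)) (X : Finset (Fin (n + 1))) : Finset (Fin (n + 1)) :=
  if Fin.last n ∈ X then insert m X else X

/-- Reassembling a non-crossing partition from the two pieces. -/
noncomputable def GPart (m : Fin (n + 1)) (σ₁ : Finset (Finset (Fin m.1)))
    (σ₂ : Finset (Finset (Fin (n - m.1)))) : Finset (Finset (Fin (n + 1))) :=
  pushb (lowE m.1 (by have := m.isLt; omega)) σ₁ ∪
  ((pushb (hiE m.1) σ₂).image (modif m)) ∪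
  (if m.1 = n then {({m} : Finset (Fin (n + 1)))} else ∅)

theorem mem_GPart {m : Fin (n + 1)} {σ₁ : Finset (Finset (Fin m.1))}
    {σ₂ : Finset (Finset (Fin (n - m.1)))} {D : Finset (Fin (n + 1))} :
    D ∈ GPart m σ₁ σ₂ ↔
      (∃ C ∈ σ₁, D = C.image (lowE m.1 (by have := m.isLt; omega))) ∨
      (∃ C ∈ σ₂, D = modif m (C.image (hiE m.1))) ∨
      (m.1 = n ∧ D = {m}) := by
  simp only [GPart, Finset.mem_union, pushb, Finset.mem_image]
  constructor
  · rintro ((⟨C, hC, rfl⟩ | ⟨X, hX, rfl⟩) | h)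
    · exact Or.inl ⟨C, hC, rfl⟩
    · obtain ⟨C, hC, rfl⟩ := hX
      exact Or.inr (Or.inl ⟨C, hC, rfl⟩)
    · by_cases hm : m.1 = n
      · rw [if_pos hm] at h
        exact Or.inr (Or.inr ⟨hm, Finset.mem_singleton.mp h⟩)
      · rw [if_neg hm] at h
        exact absurd h (Finset.notMem_empty _)
  · rintro (⟨C, hC, rfl⟩ | ⟨C, hC, rfl⟩ | ⟨hm, rfl⟩)
    · exact Or.inl (Or.inl ⟨C, hC, rfl⟩)
    · exact Or.inl (Or.inr ⟨C.image (hiE m.1), ⟨C, hC, rfl⟩, rfl⟩)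
    · right; rw [if_pos hm]; exact Finset.mem_singleton_self _

theorem mem_image_lowE {M : ℕ} {h : M ≤ n} {C : Finset (Fin M)} {y : Fin (n + 1)}
    (hy : y ∈ C.image (lowE M h)) : y.1 < M := by
  obtain ⟨x, _, rfl⟩ := Finset.mem_image.mp hy
  exact x.2

theorem mem_image_hiE {M : ℕ} {C : Finset (Fin (n - M))} {y : Fin (n + 1)}
    (hy : y ∈ C.image (hiE M)) : M < y.1 := by
  obtain ⟨x, _, rfl⟩ := Finset.mem_image.mp hy
  simp only [hiE]
  omega

theorem mem_modif {m : Fin (n + 1)} {C : Finset (Fin (n - m.1))} {y : Fin (n + 1)}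
    (hy : y ∈ modif m (C.image (hiE m.1))) : y = m ∨ y ∈ C.image (hiE m.1) := by
  by_cases h : Fin.last n ∈ C.image (hiE m.1)
  · rw [modif, if_pos h] at hy
    rcases Finset.mem_insert.mp hy with h' | h'
    · exact Or.inl h'
    · exact Or.inr h'
  · rw [modif, if_neg h] at hy
    exact Or.inr hy

theorem mem_modif_ge {m : Fin (n + 1)} {C : Finset (Fin (n - m.1))} {y : Fin (n + 1)}
    (hy : y ∈ modif m (C.image (hiE m.1))) : m.1 ≤ y.1 := by
  rcases mem_modif hy with rfl | h
  · exact le_rfl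
  · exact le_of_lt (mem_image_hiE h)

theorem blocks_of_fin_zero {k : ℕ} (hk : k = 0) {σ : Finset (Finset (Fin k))}
    (h : ∀ C ∈ σ, C.Nonempty) : σ = ∅ := by
  rcases Finset.eq_empty_or_nonempty σ with h' | ⟨C, hC⟩
  · exact h'
  · obtain ⟨x, _⟩ := h C hC
    exact absurd x.2 (by omega)

theorem hiE_last {M : ℕ} (h : M < n) :
    hiE (n := n) M ⟨n - M - 1, by omega⟩ = Fin.last n := by
  simp only [hiE, Fin.last]
  congr 1
  omega

theorem crosses_image {a b : ℕ} {f : Fin a → Fin b} (hf : StrictMono f)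
    {C1 C2 : Finset (Fin a)} (h : Crosses (C1.image f) (C2.image f)) : Crosses C1 C2 := by
  obtain ⟨i, k, p, q, o1, o2, o3, m1, m2, m3, m4⟩ := h
  obtain ⟨i', hi', rfl⟩ := Finset.mem_image.mp m1
  obtain ⟨p', hp', rfl⟩ := Finset.mem_image.mp m2
  obtain ⟨k', hk', rfl⟩ := Finset.mem_image.mp m3
  obtain ⟨q', hq', rfl⟩ := Finset.mem_image.mp m4
  exact ⟨i', k', p', q', hf.lt_iff_lt.mp o1, hf.lt_iff_lt.mp o2, hf.lt_iff_lt.mp o3,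
    hi', hp', hk', hq'⟩

end GDef
section GNC

open Finset

variable {n : ℕ}

theorem image_subset_modif (m : Fin (n + 1)) (X : Finset (Fin (n + 1))) :
    X ⊆ modif m X := by
  rw [modif]
  split
  · exact Finset.subset_insert _ _
  · exact subset_rfl

theorem hi_images_disjoint {m : Fin (n + 1)} {σ₂ : Finset (Finset (Fin (n - m.1)))}
    (h2 : IsNC' (n - m.1) σ₂) {C1 C2 : Finset (Fin (n - m.1))}
    (hC1 : C1 ∈ σ₂) (hC2 : C2 ∈ σ₂) (hne : C1 ≠ C2) {z : Fin (n + 1)}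
    (hz1 : z ∈ C1.image (hiE m.1)) (hz2 : z ∈ C2.image (hiE m.1)) : False := by
  obtain ⟨x1, hx1, rfl⟩ := Finset.mem_image.mp hz1
  obtain ⟨x2, hx2, he⟩ := Finset.mem_image.mp hz2
  have : x2 = x1 := hiE_strictMono.injective he
  subst this
  exact Finset.disjoint_left.mp (h2.1.2.2 C1 hC1 C2 hC2 hne) hx1 hx2

theorem GPart_isNC' {m : Fin (n + 1)} {σ₁ : Finset (Finset (Fin m.1))}
    {σ₂ : Finset (Finset (Fin (n - m.1)))}
    (h1 : IsNC' m.1 σ₁) (h2 : IsNC' (n - m.1) σ₂) :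
    IsNC' (n + 1) (GPart m σ₁ σ₂) := by
  have hMn : m.1 ≤ n := by have := m.isLt; omega
  have hlo := lowE_strictMono (n := n) hMn
  have hhi := hiE_strictMono (n := n) (M := m.1)
  refine ⟨⟨?_, ?_, ?_⟩, ?_⟩
  · -- nonempty blocks
    intro D hD
    rcases mem_GPart.mp hD with ⟨C, hC, rfl⟩ | ⟨C, hC, rfl⟩ | ⟨_, rfl⟩
    · obtain ⟨x, hx⟩ := h1.1.1 C hC
      exact ⟨_, Finset.mem_image_of_mem _ hx⟩
    · obtain ⟨x, hx⟩ := h2.1.1 C hC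
      exact ⟨_, image_subset_modif m _ (Finset.mem_image_of_mem _ hx)⟩
    · exact ⟨m, Finset.mem_singleton_self m⟩
  · -- cover
    intro x
    rcases lt_trichotomy x.1 m.1 with hx | hx | hx
    · obtain ⟨C, hC, hxC⟩ := h1.1.2.1 ⟨x.1, hx⟩
      refine ⟨C.image (lowE m.1 hMn), mem_GPart.mpr (Or.inl ⟨C, hC, rfl⟩), ?_⟩
      exact Finset.mem_image.mpr ⟨⟨x.1, hx⟩, hxC, Fin.ext rfl⟩
    · -- x = m
      have hxm : x = m := Fin.ext hx
      subst hxm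
      by_cases hm : x.1 = n
      · exact ⟨{x}, mem_GPart.mpr (Or.inr (Or.inr ⟨hm, rfl⟩)), Finset.mem_singleton_self x⟩
      · have hlt : x.1 < n := by omega
        obtain ⟨C, hC, hxC⟩ := h2.1.2.1 ⟨n - x.1 - 1, by omega⟩
        refine ⟨modif x (C.image (hiE x.1)), mem_GPart.mpr (Or.inr (Or.inl ⟨C, hC, rfl⟩)), ?_⟩
        have hlast : Fin.last n ∈ C.image (hiE x.1) :=
          Finset.mem_image.mpr ⟨_, hxC, hiE_last hlt⟩
        rw [modif, if_pos hlast]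
        exact Finset.mem_insert_self _ _
    · obtain ⟨C, hC, hxC⟩ := h2.1.2.1 ⟨x.1 - m.1 - 1, by have := x.isLt; omega⟩
      refine ⟨modif m (C.image (hiE m.1)), mem_GPart.mpr (Or.inr (Or.inl ⟨C, hC, rfl⟩)), ?_⟩
      apply image_subset_modif
      refine Finset.mem_image.mpr ⟨_, hxC, ?_⟩
      simp only [hiE]
      apply Fin.ext
      simp only []
      omega
  · -- disjoint
    intro D hD E hE hne
    rw [Finset.disjoint_left]
    intro z hzD hzE
    rcases mem_GPart.mp hD with ⟨C1, hC1, rfl⟩ | ⟨C1, hC1, rfl⟩ | ⟨hm1, rfl⟩ <;>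
      rcases mem_GPart.mp hE with ⟨C2, hC2, rfl⟩ | ⟨C2, hC2, rfl⟩ | ⟨hm2, rfl⟩
    · -- low / low
      have hCC : C1 ≠ C2 := fun h => hne (by rw [h])
      obtain ⟨x1, hx1, rfl⟩ := Finset.mem_image.mp hzD
      obtain ⟨x2, hx2, he⟩ := Finset.mem_image.mp hzE
      have : x2 = x1 := hlo.injective he
      subst this
      exact Finset.disjoint_left.mp (h1.1.2.2 C1 hC1 C2 hC2 hCC) hx1 hx2
    · exact absurd (mem_modif_ge hzE) (by have := mem_image_lowE hzD; omega)
    · have := mem_image_lowE hzD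
      rw [Finset.mem_singleton] at hzE
      rw [hzE] at this
      omega
    · exact absurd (mem_modif_ge hzD) (by have := mem_image_lowE hzE; omega)
    · -- hi / hi
      have hCC : C1 ≠ C2 := fun h => hne (by rw [h])
      rcases mem_modif hzD with rfl | hz1
      · rcases mem_modif hzE with he | hz2
        · -- z = m in both: both are modified, so last in both images
          have hl1 : Fin.last n ∈ C1.image (hiE z.1) := by
            by_contra hcon
            rw [modif, if_neg hcon] at hzD
            exact absurd (mem_image_hiE hzD) (lt_irrefl _)
          have hl2 : Fin.last n ∈ C2.image (hiE z.1) := by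
            by_contra hcon
            rw [modif, if_neg hcon] at hzE
            exact absurd (mem_image_hiE hzE) (lt_irrefl _)
          exact hi_images_disjoint h2 hC1 hC2 hCC hl1 hl2
        · exact absurd (mem_image_hiE hz2) (lt_irrefl _)
      · rcases mem_modif hzE with rfl | hz2
        · exact absurd (mem_image_hiE hz1) (lt_irrefl _)
        · exact hi_images_disjoint h2 hC1 hC2 hCC hz1 hz2
    · -- hi / {m} : σ₂ lives in Fin 0
      have := blocks_of_fin_zero (by omega) h2.1.1
      subst this
      exact absurd hC1 (Finset.notMem_empty _)
    · have := mem_image_lowE hzE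
      rw [Finset.mem_singleton] at hzD
      rw [hzD] at this
      omega
    · have := blocks_of_fin_zero (by omega) h2.1.1
      subst this
      exact absurd hC2 (Finset.notMem_empty _)
    · exact hne rfl
  · -- non-crossing
    intro D hD E hE hne hcr
    obtain ⟨i, k, p, q, o1, o2, o3, mi, mp, mk, mq⟩ := hcr
    rcases mem_GPart.mp hD with ⟨C1, hC1, rfl⟩ | ⟨C1, hC1, rfl⟩ | ⟨hm1, rfl⟩ <;>
      rcases mem_GPart.mp hE with ⟨C2, hC2, rfl⟩ | ⟨C2, hC2, rfl⟩ | ⟨hm2, rfl⟩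
    · -- low / low
      have hCC : C1 ≠ C2 := fun h => hne (by rw [h])
      exact h1.2 C1 hC1 C2 hC2 hCC (crosses_image hlo ⟨i, k, p, q, o1, o2, o3, mi, mp, mk, mq⟩)
    · -- low / hi : k ∈ E has k.1 ≥ m, p ∈ D has p.1 < m, but k < p
      have hk := mem_modif_ge mk
      have hp := mem_image_lowE mp
      have := Fin.lt_def.mp o2
      omega
    · rw [Finset.mem_singleton] at mk mq
      have hkq : k = q := mk.trans mq.symm
      exact absurd (o2.trans o3) (by rw [hkq]; exact lt_irrefl q)
    · -- hi / low : i ∈ D ≥ m, k ∈ E < m, i < k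
      have hi' := mem_modif_ge mi
      have hk := mem_image_lowE mk
      have := Fin.lt_def.mp o1
      omega
    · -- hi / hi
      have hCC : C1 ≠ C2 := fun h => hne (by rw [h])
      have hkm : k ≠ m := by
        intro h
        have := mem_modif_ge mi
        have := Fin.lt_def.mp o1
        omega
      have hpm : p ≠ m := by
        intro h
        have := mem_modif_ge mk
        have := Fin.lt_def.mp o2
        omega
      have hqm : q ≠ m := by
        intro h
        have := mem_modif_ge mp
        have := Fin.lt_def.mp o3
        omega
      have hk2 : k ∈ C2.image (hiE m.1) := (mem_modif mk).resolve_left hkm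
      have hp1 : p ∈ C1.image (hiE m.1) := (mem_modif mp).resolve_left hpm
      have hq2 : q ∈ C2.image (hiE m.1) := (mem_modif mq).resolve_left hqm
      rcases mem_modif mi with rfl | hi1
      · -- i = m: D was modified, so last ∈ C1.image
        have hl1 : Fin.last n ∈ C1.image (hiE i.1) := by
          by_contra hcon
          rw [modif, if_neg hcon] at mi
          exact absurd (mem_image_hiE mi) (lt_irrefl _)
        -- q ≠ last since last would be in both images
        have hql : q ≠ Fin.last n := by
          intro h
          exact hi_images_disjoint h2 hC1 hC2 hCC hl1 (h ▸ hq2)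
        exact h2.2 C2 hC2 C1 hC1 (Ne.symm hCC)
          (crosses_image hhi (C1 := C2) (C2 := C1)
            ⟨k, p, q, Fin.last n, o2, o3, lt_of_le_of_ne (Fin.le_last q) hql,
              hk2, hq2, hp1, hl1⟩)
      · exact h2.2 C1 hC1 C2 hC2 hCC
          (crosses_image hhi ⟨i, k, p, q, o1, o2, o3, hi1, hp1, hk2, hq2⟩)
    · have := blocks_of_fin_zero (by omega) h2.1.1
      subst this
      exact absurd hC1 (Finset.notMem_empty _)
    · rw [Finset.mem_singleton] at mi mp
      exact absurd (o1.trans o2) (by rw [mi, mp]; exact lt_irrefl m)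
    · rw [Finset.mem_singleton] at mi mp
      exact absurd (o1.trans o2) (by rw [mi, mp]; exact lt_irrefl m)
    · rw [Finset.mem_singleton] at mi mp
      exact absurd (o1.trans o2) (by rw [mi, mp]; exact lt_irrefl m)

end GNC
section GLink

open Finset

variable {n : ℕ} {m : Fin (n + 1)} {σ₁ : Finset (Finset (Fin m.1))}
  {σ₂ : Finset (Finset (Fin (n - m.1)))}

theorem linked_GPart_low (hMn : m.1 ≤ n) {x y : Fin m.1} :
    Linked (GPart m σ₁ σ₂) (lowE m.1 hMn x) (lowE m.1 hMn y) ↔ Linked σ₁ x y := by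
  constructor
  · rintro ⟨D, hD, hx, hy⟩
    rcases mem_GPart.mp hD with ⟨C, hC, rfl⟩ | ⟨C, hC, rfl⟩ | ⟨_, rfl⟩
    · obtain ⟨x1, hx1, he1⟩ := Finset.mem_image.mp hx
      obtain ⟨y1, hy1, he2⟩ := Finset.mem_image.mp hy
      have : x1 = x := (lowE_strictMono hMn).injective he1
      subst this
      have : y1 = y := (lowE_strictMono hMn).injective he2
      subst this
      exact ⟨C, hC, hx1, hy1⟩
    · have hxlt : (lowE m.1 hMn x).1 < m.1 := x.2
      exact absurd (mem_modif_ge hx) (not_le.mpr hxlt)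
    · rw [Finset.mem_singleton] at hx
      have hxlt : (lowE m.1 hMn x).1 < m.1 := x.2
      rw [hx] at hxlt
      exact absurd hxlt (lt_irrefl _)
  · rintro ⟨C, hC, hxC, hyC⟩
    exact ⟨C.image (lowE m.1 hMn), mem_GPart.mpr (Or.inl ⟨C, hC, rfl⟩),
      Finset.mem_image_of_mem _ hxC, Finset.mem_image_of_mem _ hyC⟩

theorem linked_GPart_hi {x y : Fin (n - m.1)} :
    Linked (GPart m σ₁ σ₂) (hiE m.1 x) (hiE m.1 y) ↔ Linked σ₂ x y := by
  have hx0 : m.1 < (hiE m.1 x).1 := by simp only [hiE]; omega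
  have hy0 : m.1 < (hiE m.1 y).1 := by simp only [hiE]; omega
  constructor
  · rintro ⟨D, hD, hx, hy⟩
    rcases mem_GPart.mp hD with ⟨C, hC, rfl⟩ | ⟨C, hC, rfl⟩ | ⟨hm, rfl⟩
    · exact absurd (mem_image_lowE hx) (by omega)
    · have hx' : hiE m.1 x ∈ C.image (hiE m.1) :=
        (mem_modif hx).resolve_left (by intro h; rw [h] at hx0; omega)
      have hy' : hiE m.1 y ∈ C.image (hiE m.1) :=
        (mem_modif hy).resolve_left (by intro h; rw [h] at hy0; omega)
      obtain ⟨x1, hx1, he1⟩ := Finset.mem_image.mp hx'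
      obtain ⟨y1, hy1, he2⟩ := Finset.mem_image.mp hy'
      have : x1 = x := hiE_strictMono.injective he1
      subst this
      have : y1 = y := hiE_strictMono.injective he2
      subst this
      exact ⟨C, hC, hx1, hy1⟩
    · rw [Finset.mem_singleton] at hx
      rw [hx] at hx0
      omega
  · rintro ⟨C, hC, hxC, hyC⟩
    exact ⟨modif m (C.image (hiE m.1)), mem_GPart.mpr (Or.inr (Or.inl ⟨C, hC, rfl⟩)),
      image_subset_modif _ _ (Finset.mem_image_of_mem _ hxC),
      image_subset_modif _ _ (Finset.mem_image_of_mem _ hyC)⟩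

theorem not_linked_GPart_cross {x y : Fin (n + 1)} (hx : x.1 < m.1) (hy : m.1 ≤ y.1) :
    ¬ Linked (GPart m σ₁ σ₂) x y := by
  rintro ⟨D, hD, hxD, hyD⟩
  rcases mem_GPart.mp hD with ⟨C, hC, rfl⟩ | ⟨C, hC, rfl⟩ | ⟨_, rfl⟩
  · exact absurd (mem_image_lowE hyD) (by omega)
  · exact absurd (mem_modif_ge hxD) (by omega)
  · rw [Finset.mem_singleton] at hxD
    rw [hxD] at hx
    omega

theorem linked_GPart_m_top (hmn : m.1 < n) (h2 : IsNC' (n - m.1) σ₂) {y : Fin (n + 1)} :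
    Linked (GPart m σ₁ σ₂) m y ↔
      y = m ∨ ∃ C ∈ σ₂, (⟨n - m.1 - 1, by omega⟩ : Fin (n - m.1)) ∈ C ∧
        y ∈ C.image (hiE m.1) := by
  constructor
  · rintro ⟨D, hD, hmD, hyD⟩
    rcases mem_GPart.mp hD with ⟨C, hC, rfl⟩ | ⟨C, hC, rfl⟩ | ⟨hm, rfl⟩
    · exact absurd (mem_image_lowE hmD) (lt_irrefl _)
    · -- D = modif, contains m, so the branch was taken
      have hlast : Fin.last n ∈ C.image (hiE m.1) := by
        by_contra hcon
        rw [modif, if_neg hcon] at hmD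
        exact absurd (mem_image_hiE hmD) (lt_irrefl _)
      obtain ⟨t, ht, hte⟩ := Finset.mem_image.mp hlast
      have htt : t = ⟨n - m.1 - 1, by omega⟩ := by
        apply Fin.ext
        have : (hiE m.1 t).1 = n := by rw [hte]; rfl
        simp only [hiE] at this
        simp only []
        omega
      rcases mem_modif hyD with rfl | hy'
      · exact Or.inl rfl
      · exact Or.inr ⟨C, hC, htt ▸ ht, hy'⟩
    · exact absurd hm (by omega)
  · intro hy
    have key : ∀ C ∈ σ₂, (⟨n - m.1 - 1, by omega⟩ : Fin (n - m.1)) ∈ C →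
        m ∈ modif m (C.image (hiE m.1)) := by
      intro C hC htC
      have hlast : Fin.last n ∈ C.image (hiE m.1) :=
        Finset.mem_image.mpr ⟨_, htC, hiE_last hmn⟩
      rw [modif, if_pos hlast]
      exact Finset.mem_insert_self _ _
    rcases hy with hy1 | ⟨C, hC, htC, hyC⟩
    · rw [hy1]
      obtain ⟨C, hC, htC⟩ := h2.1.2.1 ⟨n - m.1 - 1, by omega⟩
      exact ⟨modif m (C.image (hiE m.1)), mem_GPart.mpr (Or.inr (Or.inl ⟨C, hC, rfl⟩)),
        key C hC htC, key C hC htC⟩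
    · exact ⟨modif m (C.image (hiE m.1)), mem_GPart.mpr (Or.inr (Or.inl ⟨C, hC, rfl⟩)),
        key C hC htC, image_subset_modif _ _ hyC⟩

theorem linked_GPart_m_of_top (hmn : m.1 = n) (h2 : ∀ C ∈ σ₂, C.Nonempty) {y : Fin (n + 1)} :
    Linked (GPart m σ₁ σ₂) m y ↔ y = m := by
  constructor
  · rintro ⟨D, hD, hmD, hyD⟩
    rcases mem_GPart.mp hD with ⟨C, hC, rfl⟩ | ⟨C, hC, rfl⟩ | ⟨hm, rfl⟩
    · exact absurd (mem_image_lowE hmD) (lt_irrefl _)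
    · have := blocks_of_fin_zero (by omega) h2
      subst this
      exact absurd hC (Finset.notMem_empty _)
    · exact Finset.mem_singleton.mp hyD
  · intro hy
    rw [hy]
    exact ⟨{m}, mem_GPart.mpr (Or.inr (Or.inr ⟨hmn, rfl⟩)), Finset.mem_singleton_self m,
      Finset.mem_singleton_self m⟩

end GLink
section Round

open Finset

variable {n : ℕ}

theorem mFin_GPart {m : Fin (n + 1)} {σ₁ : Finset (Finset (Fin m.1))}
    {σ₂ : Finset (Finset (Fin (n - m.1)))}
    (h1 : IsNC' m.1 σ₁) (h2 : IsNC' (n - m.1) σ₂) :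
    mFin (GPart m σ₁ σ₂) = m := by
  have hG := GPart_isNC' h1 h2
  have hspec := mFin_spec hG.1
  have hmem : m ∈ blkLast (GPart m σ₁ σ₂) := by
    simp only [blkLast, Finset.mem_filter, Finset.mem_univ, true_and]
    by_cases hm : m.1 = n
    · have he : m = Fin.last n := Fin.ext (by rw [hm]; rfl)
      rw [← he]
      exact hG.1.linked_refl m
    · have hmn : m.1 < n := by have := m.isLt; omega
      obtain ⟨C, hC, htC⟩ := h2.1.2.1 ⟨n - m.1 - 1, by omega⟩
      have : Linked (GPart m σ₁ σ₂) m (Fin.last n) :=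
        (linked_GPart_m_top hmn h2).mpr (Or.inr ⟨C, hC, htC,
          Finset.mem_image.mpr ⟨_, htC, hiE_last hmn⟩⟩)
      exact this.symm'
  have hge : ∀ y ∈ blkLast (GPart m σ₁ σ₂), m.1 ≤ y.1 := by
    intro y hy
    simp only [blkLast, Finset.mem_filter, Finset.mem_univ, true_and] at hy
    obtain ⟨D, hD, hlastD, hyD⟩ := hy
    rcases mem_GPart.mp hD with ⟨C, hC, rfl⟩ | ⟨C, hC, rfl⟩ | ⟨hmq, rfl⟩
    · have h' := mem_image_lowE hlastD
      have h'' : (Fin.last n).1 = n := rfl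
      have := m.isLt
      omega
    · exact mem_modif_ge hyD
    · rw [Finset.mem_singleton] at hyD
      rw [hyD]
  apply Fin.ext
  apply le_antisymm
  · exact Fin.le_def.mp (hspec.2 m hmem)
  · exact hge _ hspec.1

theorem pullb_low_GPart {m : Fin (n + 1)} {σ₁ : Finset (Finset (Fin m.1))}
    {σ₂ : Finset (Finset (Fin (n - m.1)))} (hMn : m.1 ≤ n)
    (h1 : IsNC' m.1 σ₁) (h2 : IsNC' (n - m.1) σ₂) :
    pullb (lowE m.1 hMn) (GPart m σ₁ σ₂) = σ₁ :=
  part_ext (pullb_isNC' (lowE_strictMono hMn) (GPart_isNC' h1 h2)).1 h1.1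
    (fun _ _ => linked_pullb.trans (linked_GPart_low hMn))

theorem pullb_hi_GPart {m : Fin (n + 1)} {σ₁ : Finset (Finset (Fin m.1))}
    {σ₂ : Finset (Finset (Fin (n - m.1)))}
    (h1 : IsNC' m.1 σ₁) (h2 : IsNC' (n - m.1) σ₂) :
    pullb (hiE m.1) (GPart m σ₁ σ₂) = σ₂ :=
  part_ext (pullb_isNC' hiE_strictMono (GPart_isNC' h1 h2)).1 h2.1
    (fun _ _ => linked_pullb.trans linked_GPart_hi)

theorem GPart_pullb {γ : Finset (Finset (Fin (n + 1)))} (hγ : IsNC' (n + 1) γ) :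
    GPart (mFin γ)
      (pullb (lowE (mFin γ).1 (by have := (mFin γ).isLt; omega)) γ)
      (pullb (hiE (mFin γ).1) γ) = γ := by
  have hMn : (mFin γ).1 ≤ n := by have := (mFin γ).isLt; omega
  have h1 : IsNC' (mFin γ).1 (pullb (lowE (mFin γ).1 hMn) γ) :=
    pullb_isNC' (lowE_strictMono hMn) hγ
  have h2 : IsNC' (n - (mFin γ).1) (pullb (hiE (mFin γ).1) γ) :=
    pullb_isNC' hiE_strictMono hγ
  have hG := GPart_isNC' h1 h2
  apply part_ext hG.1 hγ.1
  have hbl := blkLast_spec hγ.1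
  have hms := mFin_spec hγ.1
  have notlink : ∀ x y : Fin (n + 1), x.1 < (mFin γ).1 → (mFin γ).1 ≤ y.1 →
      ¬ Linked γ x y := by
    rintro x y hx hy ⟨D, hD, hxD, hyD⟩
    by_cases hDB : D = blkLast γ
    · subst hDB
      exact absurd (mem_blkLast_ge hγ.1 hxD) (by omega)
    · rcases straddle hγ hD hDB with h | h
      · exact absurd (h y hyD) (by omega)
      · exact absurd (h x hxD) (by omega)
  have linkm : ∀ b, Linked γ (mFin γ) b ↔ b ∈ blkLast γ := by
    intro b
    constructor
    · rintro ⟨D, hD, hmD, hbD⟩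
      rwa [hγ.1.eq_of_mem hD hbl.1 hmD hms.1] at hbD
    · intro hb
      exact ⟨blkLast γ, hbl.1, hms.1, hb⟩
  have memblk : ∀ b, b ∈ blkLast γ ↔ Linked γ (Fin.last n) b := by
    intro b
    simp only [blkLast, Finset.mem_filter, Finset.mem_univ, true_and]
  suffices H : ∀ a b : Fin (n + 1), a.1 ≤ b.1 →
      (Linked (GPart (mFin γ) (pullb (lowE (mFin γ).1 hMn) γ) (pullb (hiE (mFin γ).1) γ)) a b
        ↔ Linked γ a b) by
    intro a b
    rcases le_total a.1 b.1 with h | h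
    · exact H a b h
    · exact ⟨fun hl => ((H b a h).mp hl.symm').symm', fun hl => ((H b a h).mpr hl.symm').symm'⟩
  intro a b hab
  rcases lt_trichotomy a.1 (mFin γ).1 with ha | ha | ha
  · rcases lt_or_ge b.1 (mFin γ).1 with hb | hb
    · -- both low
      have ea : lowE (mFin γ).1 hMn ⟨a.1, ha⟩ = a := Fin.ext rfl
      have eb : lowE (mFin γ).1 hMn ⟨b.1, hb⟩ = b := Fin.ext rfl
      rw [← ea, ← eb]
      exact (linked_GPart_low hMn).trans linked_pullb
    · constructor
      · intro h
        exact absurd h (not_linked_GPart_cross ha hb)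
      · intro h
        exact absurd h (notlink a b ha hb)
  · -- a = mFin γ
    have haM : a = mFin γ := Fin.ext ha
    rcases eq_or_lt_of_le (show (mFin γ).1 ≤ b.1 by omega) with hb | hb
    · have hbM : b = mFin γ := Fin.ext hb.symm
      rw [haM, hbM]
      exact ⟨fun _ => hγ.1.linked_refl _, fun _ => hG.1.linked_refl _⟩
    · have hmn : (mFin γ).1 < n := by have := b.isLt; omega
      rw [haM]
      rw [linked_GPart_m_top hmn h2, linkm b, memblk b]
      constructor
      · rintro (hbm | ⟨C, hC, htC, hbC⟩)
        · rw [hbm] at hb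
          omega
        · obtain ⟨b', hb', hbe⟩ := Finset.mem_image.mp hbC
          have hl : Linked γ (hiE (mFin γ).1 b') (hiE (mFin γ).1 ⟨n - (mFin γ).1 - 1, by omega⟩) :=
            linked_pullb.mp ⟨C, hC, hb', htC⟩
          rw [hbe, hiE_last hmn] at hl
          exact hl.symm'
      · intro hl
        have eb : hiE (mFin γ).1 ⟨b.1 - (mFin γ).1 - 1, by have := b.isLt; omega⟩ = b := by
          apply Fin.ext
          simp only [hiE]
          omega
        have hl2 : Linked γ (hiE (mFin γ).1 ⟨b.1 - (mFin γ).1 - 1, by have := b.isLt; omega⟩)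
            (hiE (mFin γ).1 ⟨n - (mFin γ).1 - 1, by omega⟩) := by
          rw [eb, hiE_last hmn]
          exact hl.symm'
        obtain ⟨C, hC, hb', htC⟩ := linked_pullb.mpr hl2
        right
        exact ⟨C, hC, htC, by rw [← eb]; exact Finset.mem_image_of_mem _ hb'⟩
  · -- both high
    have hb : (mFin γ).1 < b.1 := by omega
    have ea : hiE (mFin γ).1 ⟨a.1 - (mFin γ).1 - 1, by have := a.isLt; omega⟩ = a := by
      apply Fin.ext
      simp only [hiE]
      omega
    have eb : hiE (mFin γ).1 ⟨b.1 - (mFin γ).1 - 1, by have := b.isLt; omega⟩ = b := by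
      apply Fin.ext
      simp only [hiE]
      omega
    rw [← ea, ← eb]
    exact linked_GPart_hi.trans linked_pullb

end Round
section Count

open Finset

theorem isNC'_zero_iff {γ : Finset (Finset (Fin 0))} : IsNC' 0 γ ↔ γ = ∅ := by
  constructor
  · intro h
    exact blocks_of_fin_zero rfl h.1.1
  · rintro rfl
    refine ⟨⟨?_, ?_, ?_⟩, ?_⟩
    · intro B hB; exact absurd hB (Finset.notMem_empty _)
    · intro x; exact x.elim0
    · intro B hB; exact absurd hB (Finset.notMem_empty _)
    · intro B hB; exact absurd hB (Finset.notMem_empty _)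

/-- The fiber of the decomposition over a fixed `m`. -/
noncomputable def fiberEquiv (n : ℕ) (m : Fin (n + 1)) :
    {x : {γ : Finset (Finset (Fin (n + 1))) // IsNC' (n + 1) γ} // mFin x.1 = m} ≃
      ({σ : Finset (Finset (Fin m.1)) // IsNC' m.1 σ} ×
       {σ : Finset (Finset (Fin (n - m.1))) // IsNC' (n - m.1) σ}) where
  toFun x :=
    (⟨pullb (lowE m.1 (by have := m.isLt; omega)) x.1.1,
        pullb_isNC' (lowE_strictMono _) x.1.2⟩,
     ⟨pullb (hiE m.1) x.1.1, pullb_isNC' hiE_strictMono x.1.2⟩)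
  invFun p :=
    ⟨⟨GPart m p.1.1 p.2.1, GPart_isNC' p.1.2 p.2.2⟩, mFin_GPart p.1.2 p.2.2⟩
  left_inv := by
    rintro ⟨⟨γ, hγ⟩, hm⟩
    subst hm
    exact Subtype.ext (Subtype.ext (GPart_pullb hγ))
  right_inv := by
    rintro ⟨⟨σ₁, h1⟩, ⟨σ₂, h2⟩⟩
    have e1 := pullb_low_GPart (by have := m.isLt; omega) h1 h2
    have e2 := pullb_hi_GPart h1 h2
    exact Prod.ext (Subtype.ext e1) (Subtype.ext e2)

theorem ncCount : ∀ N : ℕ, Nat.card {γ : Finset (Finset (Fin N)) // IsNC' N γ} = catalan N := by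
  intro N
  induction N using Nat.strong_induction_on with
  | _ N ih =>
    cases N with
    | zero =>
      rw [catalan_zero]
      have h1 : Nonempty {γ : Finset (Finset (Fin 0)) // IsNC' 0 γ} :=
        ⟨⟨∅, isNC'_zero_iff.mpr rfl⟩⟩
      have h2 : Subsingleton {γ : Finset (Finset (Fin 0)) // IsNC' 0 γ} :=
        ⟨fun a b => Subtype.ext (by rw [isNC'_zero_iff.mp a.2, isNC'_zero_iff.mp b.2])⟩
      exact Nat.card_unique
    | succ n =>
      have e1 := (Equiv.sigmaFiberEquiv
        (fun x : {γ : Finset (Finset (Fin (n + 1))) // IsNC' (n + 1) γ} => mFin x.1)).symm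
      rw [Nat.card_congr e1, Nat.card_eq_fintype_card, Fintype.card_sigma, catalan_succ]
      apply Finset.sum_congr rfl
      intro m _
      rw [← Nat.card_eq_fintype_card, Nat.card_congr (fiberEquiv n m), Nat.card_prod,
        ih m.1 (by have := m.isLt; omega), ih (n - m.1) (by omega)]

end Count
/-! ### The Kreweras complement -/

section KrRel

open Finset

/-- `x` lies in the half-open interval between `a` and `b`. -/
def InIv {n : ℕ} (a b x : Fin n) : Prop :=
  min a.1 b.1 < x.1 ∧ x.1 ≤ max a.1 b.1

/-- The Kreweras relation: every block of `δ` is inside or outside the interval. -/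
def krRel (n : ℕ) (δ : Finset (Finset (Fin n))) (a b : Fin n) : Prop :=
  ∀ B ∈ δ, (∀ x ∈ B, InIv a b x) ∨ (∀ x ∈ B, ¬ InIv a b x)

theorem krRel_equivalence {n : ℕ} {δ : Finset (Finset (Fin n))} :
    Equivalence (krRel n δ) := by
  constructor
  · intro a B hB
    right
    intro x _ hc
    simp only [InIv] at hc
    omega
  · intro a b h B hB
    rcases h B hB with h1 | h1
    · left
      intro x hx
      have := h1 x hx
      simp only [InIv] at this ⊢
      omega
    · right
      intro x hx hc
      apply h1 x hx
      simp only [InIv] at hc ⊢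
      omega
  · intro a b c hab hbc B hB
    by_cases hall : ∀ x ∈ B, ¬ InIv a c x
    · right; exact hall
    · left
      push_neg at hall
      obtain ⟨x0, hx0, hx0iv⟩ := hall
      intro x hx
      rcases hab B hB with h1 | h1 <;> rcases hbc B hB with h2 | h2 <;>
      · have p1 := h1 x hx
        have p2 := h2 x hx
        have q1 := h1 x0 hx0
        have q2 := h2 x0 hx0
        simp only [InIv] at p1 p2 q1 q2 hx0iv ⊢
        omega

/-- The Kreweras complement, as the partition of the Kreweras relation. -/
noncomputable def krC (n : ℕ) (δ : Finset (Finset (Fin n))) : Finset (Finset (Fin n)) :=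
  ofRel n (krRel n δ)

theorem krC_isNC' {n : ℕ} (δ : Finset (Finset (Fin n))) : IsNC' n (krC n δ) := by
  have hpart := ofRel_isPart (krRel_equivalence (δ := δ))
  refine ⟨hpart, ?_⟩
  rintro B hB C hC hne ⟨i, k, p, q, o1, o2, o3, mi, mp, mk, mq⟩
  rw [Fin.lt_def] at o1 o2 o3
  have hip : krRel n δ i p := (ofRel_linked krRel_equivalence).mp ⟨B, hB, mi, mp⟩
  have hkq : krRel n δ k q := (ofRel_linked krRel_equivalence).mp ⟨C, hC, mk, mq⟩
  have hik : krRel n δ i k := by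
    intro B0 hB0
    rcases hip B0 hB0 with h1 | h1 <;> rcases hkq B0 hB0 with h2 | h2
    · right
      intro x hx hc
      have p1 := h1 x hx
      have p2 := h2 x hx
      simp only [InIv] at p1 p2 hc
      omega
    · left
      intro x hx
      have p1 := h1 x hx
      have p2 := h2 x hx
      simp only [InIv] at p1 p2 ⊢
      omega
    · right
      intro x hx hc
      have p1 := h1 x hx
      have p2 := h2 x hx
      simp only [InIv] at p1 p2 hc
      omega
    · right
      intro x hx hc
      have p1 := h1 x hx
      have p2 := h2 x hx
      simp only [InIv] at p1 p2 hc
      omega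
  obtain ⟨D, hD, hiD, hkD⟩ := (ofRel_linked krRel_equivalence).mpr hik
  have hDB : D = B := hpart.eq_of_mem hD hB hiD mi
  exact Finset.disjoint_left.mp (hpart.2.2 B hB C hC hne) (hDB ▸ hkD) mk

end KrRel
section Inter

open Finset

variable {n : ℕ}

theorem ueEmb_strictMono : StrictMono (ueEmb n) := by
  intro x y h
  rw [Fin.lt_def] at h ⊢
  simp only [ueEmb]
  omega

theorem beEmb_strictMono : StrictMono (beEmb n) := by
  intro x y h
  rw [Fin.lt_def] at h ⊢
  simp only [beEmb]
  omega

theorem mem_interleave {δ τ : Finset (Finset (Fin n))} {D : Finset (Fin (2 * n))} :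
    D ∈ interleave n δ τ ↔
      (∃ B ∈ δ, D = B.image (ueEmb n)) ∨ (∃ C ∈ τ, D = C.image (beEmb n)) := by
  simp only [interleave, Finset.mem_union, Finset.mem_image]
  constructor
  · rintro (⟨B, hB, rfl⟩ | ⟨C, hC, rfl⟩)
    · exact Or.inl ⟨B, hB, rfl⟩
    · exact Or.inr ⟨C, hC, rfl⟩
  · rintro (⟨B, hB, rfl⟩ | ⟨C, hC, rfl⟩)
    · exact Or.inl ⟨B, hB, rfl⟩
    · exact Or.inr ⟨C, hC, rfl⟩

theorem mem_image_ue_even {B : Finset (Fin n)} {z : Fin (2 * n)}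
    (hz : z ∈ B.image (ueEmb n)) : z.1 % 2 = 0 := by
  obtain ⟨x, _, rfl⟩ := Finset.mem_image.mp hz
  simp only [ueEmb]
  omega

theorem mem_image_be_odd {C : Finset (Fin n)} {z : Fin (2 * n)}
    (hz : z ∈ C.image (beEmb n)) : z.1 % 2 = 1 := by
  obtain ⟨x, _, rfl⟩ := Finset.mem_image.mp hz
  simp only [beEmb]
  omega

theorem image_ue_ne_image_be {B C : Finset (Fin n)} (hB : B.Nonempty) :
    B.image (ueEmb n) ≠ C.image (beEmb n) := by
  intro h
  obtain ⟨x, hx⟩ := hB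
  have h1 : ueEmb n x ∈ B.image (ueEmb n) := Finset.mem_image_of_mem _ hx
  rw [h] at h1
  have := mem_image_be_odd h1
  simp only [ueEmb] at this
  omega

/-- The interleave of `δ` with its Kreweras complement is non-crossing. -/
theorem interleave_krC_isNC' {δ : Finset (Finset (Fin n))} (hδ : IsNC' n δ) :
    IsNC' (2 * n) (interleave n δ (krC n δ)) := by
  have hτ := krC_isNC' δ
  have hτpart := hτ.1
  refine ⟨⟨?_, ?_, ?_⟩, ?_⟩
  · intro D hD
    rcases mem_interleave.mp hD with ⟨B, hB, rfl⟩ | ⟨C, hC, rfl⟩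
    · obtain ⟨x, hx⟩ := hδ.1.1 B hB
      exact ⟨_, Finset.mem_image_of_mem _ hx⟩
    · obtain ⟨x, hx⟩ := hτpart.1 C hC
      exact ⟨_, Finset.mem_image_of_mem _ hx⟩
  · intro z
    rcases Nat.even_or_odd z.1 with he | ho
    · have hz2 : z.1 / 2 < n := by have := z.isLt; omega
      obtain ⟨B, hB, hxB⟩ := hδ.1.2.1 ⟨z.1 / 2, hz2⟩
      refine ⟨B.image (ueEmb n), mem_interleave.mpr (Or.inl ⟨B, hB, rfl⟩), ?_⟩
      refine Finset.mem_image.mpr ⟨_, hxB, ?_⟩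
      apply Fin.ext
      simp only [ueEmb]
      obtain ⟨t, ht⟩ := he
      omega
    · have hz2 : z.1 / 2 < n := by have := z.isLt; omega
      obtain ⟨C, hC, hxC⟩ := hτpart.2.1 ⟨z.1 / 2, hz2⟩
      refine ⟨C.image (beEmb n), mem_interleave.mpr (Or.inr ⟨C, hC, rfl⟩), ?_⟩
      refine Finset.mem_image.mpr ⟨_, hxC, ?_⟩
      apply Fin.ext
      simp only [beEmb]
      obtain ⟨t, ht⟩ := ho
      omega
  · intro D hD E hE hne
    rw [Finset.disjoint_left]
    intro z hzD hzE
    rcases mem_interleave.mp hD with ⟨B1, hB1, rfl⟩ | ⟨C1, hC1, rfl⟩ <;>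
      rcases mem_interleave.mp hE with ⟨B2, hB2, rfl⟩ | ⟨C2, hC2, rfl⟩
    · have hBB : B1 ≠ B2 := fun h => hne (by rw [h])
      obtain ⟨x1, hx1, rfl⟩ := Finset.mem_image.mp hzD
      obtain ⟨x2, hx2, he⟩ := Finset.mem_image.mp hzE
      have : x2 = x1 := ueEmb_strictMono.injective he
      subst this
      exact Finset.disjoint_left.mp (hδ.1.2.2 B1 hB1 B2 hB2 hBB) hx1 hx2
    · have h1 := mem_image_ue_even hzD
      have h2 := mem_image_be_odd hzE
      omega
    · have h1 := mem_image_be_odd hzD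
      have h2 := mem_image_ue_even hzE
      omega
    · have hCC : C1 ≠ C2 := fun h => hne (by rw [h])
      obtain ⟨x1, hx1, rfl⟩ := Finset.mem_image.mp hzD
      obtain ⟨x2, hx2, he⟩ := Finset.mem_image.mp hzE
      have : x2 = x1 := beEmb_strictMono.injective he
      subst this
      exact Finset.disjoint_left.mp (hτpart.2.2 C1 hC1 C2 hC2 hCC) hx1 hx2
  · intro D hD E hE hne hcr
    rcases mem_interleave.mp hD with ⟨B1, hB1, rfl⟩ | ⟨C1, hC1, rfl⟩ <;>
      rcases mem_interleave.mp hE with ⟨B2, hB2, rfl⟩ | ⟨C2, hC2, rfl⟩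
    · have hBB : B1 ≠ B2 := fun h => hne (by rw [h])
      exact hδ.2 B1 hB1 B2 hB2 hBB (crosses_image ueEmb_strictMono hcr)
    · -- δ block crosses krC block: impossible by the Kreweras relation
      obtain ⟨i, k, p, q, o1, o2, o3, mi, mp, mk, mq⟩ := hcr
      obtain ⟨a, ha, rfl⟩ := Finset.mem_image.mp mi
      obtain ⟨c, hc, rfl⟩ := Finset.mem_image.mp mp
      obtain ⟨b, hb, rfl⟩ := Finset.mem_image.mp mk
      obtain ⟨d, hd, rfl⟩ := Finset.mem_image.mp mq
      rw [Fin.lt_def] at o1 o2 o3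
      simp only [ueEmb, beEmb] at o1 o2 o3
      have hbd : krRel n δ b d := (ofRel_linked krRel_equivalence).mp ⟨C2, hC2, hb, hd⟩
      rcases hbd B1 hB1 with h | h
      · have := h a ha
        simp only [InIv] at this
        omega
      · have := h c hc
        simp only [InIv] at this
        omega
    · obtain ⟨i, k, p, q, o1, o2, o3, mi, mp, mk, mq⟩ := hcr
      obtain ⟨b, hb, rfl⟩ := Finset.mem_image.mp mi
      obtain ⟨c, hc, rfl⟩ := Finset.mem_image.mp mp
      obtain ⟨a, ha, rfl⟩ := Finset.mem_image.mp mk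
      obtain ⟨d, hd, rfl⟩ := Finset.mem_image.mp mq
      rw [Fin.lt_def] at o1 o2 o3
      simp only [ueEmb, beEmb] at o1 o2 o3
      have hbc : krRel n δ b c := (ofRel_linked krRel_equivalence).mp ⟨C1, hC1, hb, hc⟩
      rcases hbc B2 hB2 with h | h
      · have := h d hd
        simp only [InIv] at this
        omega
      · have := h a ha
        simp only [InIv] at this
        omega
    · have hCC : C1 ≠ C2 := fun h => hne (by rw [h])
      exact hτ.2 C1 hC1 C2 hC2 hCC (crosses_image beEmb_strictMono hcr)

end Inter
section KrMax

open Finset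

variable {n : ℕ}

theorem krC_linked_le {δ τ' : Finset (Finset (Fin n))}
    (hint : IsNC' (2 * n) (interleave n δ τ')) {a b : Fin n} (hab : Linked τ' a b) :
    krRel n δ a b := by
  suffices H : ∀ a b : Fin n, a.1 ≤ b.1 → Linked τ' a b → krRel n δ a b by
    rcases le_total a.1 b.1 with h | h
    · exact H a b h hab
    · exact krRel_equivalence.symm (H b a h hab.symm')
  clear hab
  intro a b hab hl
  intro B hB
  by_contra hcon
  push_neg at hcon
  obtain ⟨⟨x, hx, hxiv⟩, y, hy, hyiv⟩ := hcon
  obtain ⟨C', hC', haC, hbC⟩ := hl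
  have hE : B.image (ueEmb n) ∈ interleave n δ τ' :=
    mem_interleave.mpr (Or.inl ⟨B, hB, rfl⟩)
  have hO : C'.image (beEmb n) ∈ interleave n δ τ' :=
    mem_interleave.mpr (Or.inr ⟨C', hC', rfl⟩)
  have hEO : B.image (ueEmb n) ≠ C'.image (beEmb n) := image_ue_ne_image_be ⟨x, hx⟩
  simp only [InIv] at hxiv hyiv
  rcases (by omega : x.1 ≤ a.1 ∨ b.1 < x.1) with hxc | hxc
  · exact hint.2 _ hE _ hO hEO
      ⟨ueEmb n x, beEmb n a, ueEmb n y, beEmb n b,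
        by rw [Fin.lt_def]; simp only [ueEmb, beEmb]; omega,
        by rw [Fin.lt_def]; simp only [ueEmb, beEmb]; omega,
        by rw [Fin.lt_def]; simp only [ueEmb, beEmb]; omega,
        Finset.mem_image_of_mem _ hx, Finset.mem_image_of_mem _ hy,
        Finset.mem_image_of_mem _ haC, Finset.mem_image_of_mem _ hbC⟩
  · exact hint.2 _ hO _ hE (Ne.symm hEO)
      ⟨beEmb n a, ueEmb n y, beEmb n b, ueEmb n x,
        by rw [Fin.lt_def]; simp only [ueEmb, beEmb]; omega,
        by rw [Fin.lt_def]; simp only [ueEmb, beEmb]; omega,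
        by rw [Fin.lt_def]; simp only [ueEmb, beEmb]; omega,
        Finset.mem_image_of_mem _ haC, Finset.mem_image_of_mem _ hbC,
        Finset.mem_image_of_mem _ hy, Finset.mem_image_of_mem _ hx⟩

theorem krC_refines {δ τ' : Finset (Finset (Fin n))}
    (hτ' : IsNC n τ') (hint : IsNC (2 * n) (interleave n δ τ')) :
    Refines n τ' (krC n δ) :=
  refines_of_linked_le (isNC_iff.mp hτ').1 (ofRel_isPart krRel_equivalence)
    (fun _ _ hl => (ofRel_linked krRel_equivalence).mpr
      (krC_linked_le (isNC_iff.mp hint) hl))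

theorem isKr_krC {δ : Finset (Finset (Fin n))} (hδ : IsNC' n δ) : IsKr n δ (krC n δ) :=
  ⟨isNC_iff.mpr (krC_isNC' δ), isNC_iff.mpr (interleave_krC_isNC' hδ),
   fun _ hτ hint => krC_refines hτ hint⟩

theorem isKr_unique {δ τ₁ τ₂ : Finset (Finset (Fin n))}
    (h1 : IsKr n δ τ₁) (h2 : IsKr n δ τ₂) : τ₁ = τ₂ :=
  eq_of_mutual_refines (isNC_iff.mp h1.1).1 (isNC_iff.mp h2.1).1
    (h2.2.2 τ₁ h1.1 h1.2.1) (h1.2.2 τ₂ h2.1 h2.2.1)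

end KrMax
section Recov

open Finset

variable {n : ℕ}

theorem image_ue_image_half {B0 : Finset (Fin (2 * n))} (hev : ∀ i ∈ B0, i.1 % 2 = 0) :
    (B0.image (halfEmb n)).image (ueEmb n) = B0 := by
  rw [Finset.image_image]
  ext z
  simp only [Finset.mem_image, Function.comp]
  constructor
  · rintro ⟨x, hx, rfl⟩
    have hx2 := hev x hx
    have he : ueEmb n (halfEmb n x) = x := by
      apply Fin.ext
      simp only [ueEmb, halfEmb]
      omega
    rwa [he]
  · intro hz
    refine ⟨z, hz, ?_⟩
    have hz2 := hev z hz
    apply Fin.ext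
    simp only [ueEmb, halfEmb]
    omega

theorem image_be_image_half {B0 : Finset (Fin (2 * n))} (hod : ∀ i ∈ B0, i.1 % 2 = 1) :
    (B0.image (halfEmb n)).image (beEmb n) = B0 := by
  rw [Finset.image_image]
  ext z
  simp only [Finset.mem_image, Function.comp]
  constructor
  · rintro ⟨x, hx, rfl⟩
    have hx2 := hod x hx
    have he : beEmb n (halfEmb n x) = x := by
      apply Fin.ext
      simp only [beEmb, halfEmb]
      omega
    rwa [he]
  · intro hz
    refine ⟨z, hz, ?_⟩
    have hz2 := hod z hz
    apply Fin.ext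
    simp only [beEmb, halfEmb]
    omega

theorem image_half_image_ue (B : Finset (Fin n)) :
    (B.image (ueEmb n)).image (halfEmb n) = B := by
  rw [Finset.image_image]
  ext y
  simp only [Finset.mem_image, Function.comp]
  constructor
  · rintro ⟨x, hx, rfl⟩
    have : halfEmb n (ueEmb n x) = x := by
      apply Fin.ext
      simp only [halfEmb, ueEmb]
      omega
    rwa [this]
  · intro hy
    refine ⟨y, hy, ?_⟩
    apply Fin.ext
    simp only [halfEmb, ueEmb]
    omega

theorem image_half_image_be (B : Finset (Fin n)) :
    (B.image (beEmb n)).image (halfEmb n) = B := by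
  rw [Finset.image_image]
  ext y
  simp only [Finset.mem_image, Function.comp]
  constructor
  · rintro ⟨x, hx, rfl⟩
    have : halfEmb n (beEmb n x) = x := by
      apply Fin.ext
      simp only [halfEmb, beEmb]
      omega
    rwa [this]
  · intro hy
    refine ⟨y, hy, ?_⟩
    apply Fin.ext
    simp only [halfEmb, beEmb]
    omega

theorem minusPart_interleave {δ τ : Finset (Finset (Fin n))}
    (hτne : ∀ C ∈ τ, C.Nonempty) :
    minusPart n (interleave n δ τ) = δ := by
  ext D
  simp only [minusPart, Finset.mem_image, Finset.mem_filter]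
  constructor
  · rintro ⟨B, ⟨hBmem, hBev⟩, rfl⟩
    rcases mem_interleave.mp hBmem with ⟨B0, hB0, rfl⟩ | ⟨C0, hC0, rfl⟩
    · rw [image_half_image_ue]
      exact hB0
    · obtain ⟨x, hx⟩ := hτne C0 hC0
      have := hBev _ (Finset.mem_image_of_mem (beEmb n) hx)
      simp only [beEmb] at this
      omega
  · intro hD
    exact ⟨D.image (ueEmb n), ⟨mem_interleave.mpr (Or.inl ⟨D, hD, rfl⟩),
      fun i hi => mem_image_ue_even hi⟩, image_half_image_ue D⟩

theorem plusPart_interleave {δ τ : Finset (Finset (Fin n))}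
    (hδne : ∀ B ∈ δ, B.Nonempty) :
    plusPart n (interleave n δ τ) = τ := by
  ext D
  simp only [plusPart, Finset.mem_image, Finset.mem_filter]
  constructor
  · rintro ⟨B, ⟨hBmem, hBod⟩, rfl⟩
    rcases mem_interleave.mp hBmem with ⟨B0, hB0, rfl⟩ | ⟨C0, hC0, rfl⟩
    · obtain ⟨x, hx⟩ := hδne B0 hB0
      have := hBod _ (Finset.mem_image_of_mem (ueEmb n) hx)
      simp only [ueEmb] at this
      omega
    · rw [image_half_image_be]
      exact hC0
  · intro hD
    exact ⟨D.image (beEmb n), ⟨mem_interleave.mpr (Or.inr ⟨D, hD, rfl⟩),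
      fun i hi => mem_image_be_odd hi⟩, image_half_image_be D⟩

theorem minusPart_isNC' {γ : Finset (Finset (Fin (2 * n)))} (hγ : IsNC' (2 * n) γ)
    (hpar : ∀ B ∈ γ, (∀ i ∈ B, i.1 % 2 = 0) ∨ (∀ i ∈ B, i.1 % 2 = 1)) :
    IsNC' n (minusPart n γ) := by
  have hmem : ∀ D : Finset (Fin n), D ∈ minusPart n γ ↔
      ∃ B ∈ γ, (∀ i ∈ B, i.1 % 2 = 0) ∧ D = B.image (halfEmb n) := by
    intro D
    simp only [minusPart, Finset.mem_image, Finset.mem_filter]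
    constructor
    · rintro ⟨B, ⟨hB, hev⟩, rfl⟩
      exact ⟨B, hB, hev, rfl⟩
    · rintro ⟨B, hB, hev, rfl⟩
      exact ⟨B, ⟨hB, hev⟩, rfl⟩
  have lift : ∀ (B : Finset (Fin (2 * n))), (∀ i ∈ B, i.1 % 2 = 0) →
      ∀ y : Fin n, y ∈ B.image (halfEmb n) →
      ∃ x ∈ B, x.1 = 2 * y.1 := by
    intro B hev y hy
    obtain ⟨x, hx, rfl⟩ := Finset.mem_image.mp hy
    have := hev x hx
    exact ⟨x, hx, by simp only [halfEmb]; omega⟩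
  refine ⟨⟨?_, ?_, ?_⟩, ?_⟩
  · intro D hD
    obtain ⟨B, hB, hev, rfl⟩ := (hmem D).mp hD
    obtain ⟨x, hx⟩ := hγ.1.1 B hB
    exact ⟨_, Finset.mem_image_of_mem _ hx⟩
  · intro y
    have hlt : 2 * y.1 < 2 * n := by have := y.isLt; omega
    obtain ⟨B, hB, hzB⟩ := hγ.1.2.1 ⟨2 * y.1, hlt⟩
    have hev : ∀ i ∈ B, i.1 % 2 = 0 := by
      rcases hpar B hB with h | h
      · exact h
      · have := h _ hzB
        simp only at this
        omega
    refine ⟨B.image (halfEmb n), (hmem _).mpr ⟨B, hB, hev, rfl⟩, ?_⟩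
    refine Finset.mem_image.mpr ⟨_, hzB, ?_⟩
    apply Fin.ext
    simp only [halfEmb]
    omega
  · intro D hD E hE hne
    obtain ⟨B1, hB1, hev1, rfl⟩ := (hmem D).mp hD
    obtain ⟨B2, hB2, hev2, rfl⟩ := (hmem E).mp hE
    have hBB : B1 ≠ B2 := fun h => hne (by rw [h])
    rw [Finset.disjoint_left]
    intro z hz1 hz2
    obtain ⟨x1, hx1, he1⟩ := lift B1 hev1 z hz1
    obtain ⟨x2, hx2, he2⟩ := lift B2 hev2 z hz2
    have : x1 = x2 := Fin.ext (by omega)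
    subst this
    exact Finset.disjoint_left.mp (hγ.1.2.2 B1 hB1 B2 hB2 hBB) hx1 hx2
  · rintro D hD E hE hne ⟨i, k, p, q, o1, o2, o3, mi, mp, mk, mq⟩
    obtain ⟨B1, hB1, hev1, rfl⟩ := (hmem D).mp hD
    obtain ⟨B2, hB2, hev2, rfl⟩ := (hmem E).mp hE
    have hBB : B1 ≠ B2 := fun h => hne (by rw [h])
    rw [Fin.lt_def] at o1 o2 o3
    obtain ⟨xi, hxi, hei⟩ := lift B1 hev1 i mi
    obtain ⟨xp, hxp, hep⟩ := lift B1 hev1 p mp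
    obtain ⟨xk, hxk, hek⟩ := lift B2 hev2 k mk
    obtain ⟨xq, hxq, heq⟩ := lift B2 hev2 q mq
    exact hγ.2 B1 hB1 B2 hB2 hBB
      ⟨xi, xk, xp, xq, Fin.lt_def.mpr (by omega), Fin.lt_def.mpr (by omega),
        Fin.lt_def.mpr (by omega), hxi, hxp, hxk, hxq⟩

theorem interleave_parts {γ : Finset (Finset (Fin (2 * n)))}
    (hpar : ∀ B ∈ γ, (∀ i ∈ B, i.1 % 2 = 0) ∨ (∀ i ∈ B, i.1 % 2 = 1)) :
    interleave n (minusPart n γ) (plusPart n γ) = γ := by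
  ext D
  rw [mem_interleave]
  constructor
  · rintro (⟨B, hB, rfl⟩ | ⟨C, hC, rfl⟩)
    · simp only [minusPart, Finset.mem_image, Finset.mem_filter] at hB
      obtain ⟨B0, ⟨hB0, hev⟩, rfl⟩ := hB
      rw [image_ue_image_half hev]
      exact hB0
    · simp only [plusPart, Finset.mem_image, Finset.mem_filter] at hC
      obtain ⟨C0, ⟨hC0, hod⟩, rfl⟩ := hC
      rw [image_be_image_half hod]
      exact hC0
  · intro hD
    rcases hpar D hD with hev | hod
    · refine Or.inl ⟨D.image (halfEmb n), ?_, (image_ue_image_half hev).symm⟩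
      simp only [minusPart, Finset.mem_image, Finset.mem_filter]
      exact ⟨D, ⟨hD, hev⟩, rfl⟩
    · refine Or.inr ⟨D.image (halfEmb n), ?_, (image_be_image_half hod).symm⟩
      simp only [plusPart, Finset.mem_image, Finset.mem_filter]
      exact ⟨D, ⟨hD, hod⟩, rfl⟩

theorem NCs_interleave_krC {δ : Finset (Finset (Fin n))} (hδ : IsNC' n δ) :
    NCs n (interleave n δ (krC n δ)) := by
  have hkr := krC_isNC' δ
  refine ⟨isNC_iff.mpr (interleave_krC_isNC' hδ), ?_, ?_⟩
  · intro B hB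
    rcases mem_interleave.mp hB with ⟨B0, _, rfl⟩ | ⟨C0, _, rfl⟩
    · exact Or.inl fun i hi => mem_image_ue_even hi
    · exact Or.inr fun i hi => mem_image_be_odd hi
  · rw [minusPart_interleave hkr.1.1, plusPart_interleave hδ.1.1]
    exact isKr_krC hδ

theorem ncs_eq_interleave {γ : Finset (Finset (Fin (2 * n)))} (hγ : NCs n γ) :
    γ = interleave n (minusPart n γ) (krC n (minusPart n γ)) := by
  have hδ : IsNC' n (minusPart n γ) := minusPart_isNC' (isNC_iff.mp hγ.1) hγ.2.1
  have hu : plusPart n γ = krC n (minusPart n γ) := isKr_unique hγ.2.2 (isKr_krC hδ)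
  rw [← hu]
  exact (interleave_parts hγ.2.1).symm

theorem card_ncs_eq_nc' :
    Nat.card {γ : Finset (Finset (Fin (2 * n))) // NCs n γ} =
      Nat.card {δ : Finset (Finset (Fin n)) // IsNC' n δ} := by
  apply Nat.card_congr
  refine ⟨fun x => ⟨minusPart n x.1, minusPart_isNC' (isNC_iff.mp x.2.1) x.2.2.1⟩,
          fun d => ⟨interleave n d.1 (krC n d.1), NCs_interleave_krC d.2⟩, ?_, ?_⟩
  · rintro ⟨γ, hγ⟩
    exact Subtype.ext (ncs_eq_interleave hγ).symm
  · rintro ⟨δ, hδ⟩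
    exact Subtype.ext (minusPart_interleave (krC_isNC' δ).1.1)

end Recov

/-- `NC_s(2n)` has the same cardinality as `NC(n)`, namely the Catalan number
`C_n = (1/(n+1)) · binom(2n, n)`. -/
theorem card_ncs (n : ℕ) :
    Nat.card {γ : Finset (Finset (Fin (2 * n))) // NCs n γ} =
      Nat.card {γ : Finset (Finset (Fin n)) // IsNC n γ} ∧
    Nat.card {γ : Finset (Finset (Fin (2 * n))) // NCs n γ} = catalan n ∧
    (n + 1) * catalan n = (2 * n).choose n := by
  have h2 : Nat.card {γ : Finset (Finset (Fin n)) // IsNC n γ} =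
      Nat.card {γ : Finset (Finset (Fin n)) // IsNC' n γ} :=
    Nat.card_congr (Equiv.subtypeEquivRight (fun γ => isNC_iff))
  refine ⟨?_, ?_, ?_⟩
  · rw [card_ncs_eq_nc']
    exact h2.symm
  · rw [card_ncs_eq_nc']
    exact ncCount n
  · exact succ_mul_catalan_eq_centralBinom n
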